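/- arXiv:1608.08843 — 5 statements merged into one kernel-verified Lean document; each statement's English description precedes it below -/
import Mathlib

section
/- For every d ≥ 2, the standard example S_d (the poset on 2d points a_1,…,a_d,b_1,…,b_d where a_i < b_j iff i ≠ j, and no other strict comparabilities) has order dimension exactly d. -/
variable {α : Type*}

/-- A linear extension of a partial order, given as a binary relation. -/
def IsLinExt [PartialOrder α] (r : α → α → Prop) : Prop :=
  IsLinearOrder α r ∧ ∀ x y : α, x ≤ y → r x y

/-- A realizer: a family of linear extensions whose intersection is the order. -/
def IsRealizer [PartialOrder α] {d : ℕ} (L : Fin d → α → α → Prop) : Prop :=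
  (∀ i, IsLinExt (L i)) ∧ ∀ x y : α, x ≤ y ↔ ∀ i, L i x y

/-- The order dimension of a poset: the least positive `d` admitting a realizer of size `d`. -/
noncomputable def pdim (α : Type*) [PartialOrder α] : ℕ :=
  sInf {d | 0 < d ∧ ∃ L : Fin d → α → α → Prop, IsRealizer L}

/-- The set of (ordered) incomparable pairs of a poset. -/
def IncPairs (α : Type*) [PartialOrder α] : Set (α × α) :=
  {p | ¬ p.1 ≤ p.2 ∧ ¬ p.2 ≤ p.1}

/-- `r` reverses every pair `(x, y)` in `S`, i.e. `x > y` in `r`. -/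
def Reverses [PartialOrder α] (r : α → α → Prop) (S : Set (α × α)) : Prop :=
  ∀ p ∈ S, r p.2 p.1 ∧ ¬ r p.1 p.2

/-- A set of incomparable pairs is reversible if some linear extension reverses all of them. -/
def Reversible [PartialOrder α] (S : Set (α × α)) : Prop :=
  ∃ r, IsLinExt r ∧ Reverses r S

/-- `d` linear extensions suffice to reverse every pair of `S` (i.e. `dim S ≤ d`). -/
def RealizerOn [PartialOrder α] (d : ℕ) (S : Set (α × α)) : Prop :=
  ∃ L : Fin d → α → α → Prop, (∀ i, IsLinExt (L i)) ∧
    ∀ p ∈ S, ∃ i, L i p.2 p.1 ∧ ¬ L i p.1 p.2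

/-- The height of a subset of a poset: the maximum size of a chain contained in it. -/
noncomputable def heightSet [PartialOrder α] (S : Set α) : ℕ :=
  sSup {n | ∃ t : Finset α, ↑t ⊆ S ∧ IsChain (· ≤ ·) (↑t : Set α) ∧ t.card = n}

/-- The height of a poset: the maximum size of a chain. -/
noncomputable def pheight (α : Type*) [PartialOrder α] : ℕ :=
  heightSet (Set.univ : Set α)

/-- The standard example `S_d`: minimal elements `a_i = inl i`, maximal elements
`b_j = inr j`, with `a_i < b_j` iff `i ≠ j`. -/
def StdEx (d : ℕ) : Type := Fin d ⊕ Fin d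

def StdEx.le {d : ℕ} : StdEx d → StdEx d → Prop
  | .inl i, .inl j => i = j
  | .inr i, .inr j => i = j
  | .inl i, .inr j => i ≠ j
  | .inr _, .inl _ => False

theorem StdEx.le_refl' {d : ℕ} (x : StdEx d) : StdEx.le x x := by
  cases x <;> simp [StdEx.le]

theorem StdEx.le_trans' {d : ℕ} (x y z : StdEx d)
    (hxy : StdEx.le x y) (hyz : StdEx.le y z) : StdEx.le x z := by
  cases x <;> cases y <;> cases z <;> simp_all [StdEx.le]

theorem StdEx.le_antisymm' {d : ℕ} (x y : StdEx d)
    (hxy : StdEx.le x y) (hyx : StdEx.le y x) : x = y := by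
  cases x <;> cases y <;> simp_all [StdEx.le] <;> subst_vars <;> rfl

instance (d : ℕ) : PartialOrder (StdEx d) where
  le := StdEx.le
  le_refl := StdEx.le_refl'
  le_trans := StdEx.le_trans'
  le_antisymm := StdEx.le_antisymm'


def stdA (d : ℕ) (i : Fin d) : StdEx d := Sum.inl i
def stdB (d : ℕ) (i : Fin d) : StdEx d := Sum.inr i

theorem stdA_le_stdB {d : ℕ} {i j : Fin d} (h : i ≠ j) : stdA d i ≤ stdB d j := h

theorem not_stdA_le_stdB {d : ℕ} (i : Fin d) : ¬ stdA d i ≤ stdB d i := fun h => h rfl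

/-- Rank function for the `k`-th linear extension of the standard example. -/
def stdRank (d : ℕ) (k : Fin d) : StdEx d → ℕ
  | .inl i => if i = k then d + 1 else i
  | .inr j => if j = k then d else d + 2 + j

theorem stdRank_inj (d : ℕ) (k : Fin d) : Function.Injective (stdRank d k) := by
  intro x y h
  have hik := k.isLt
  cases x with
  | inl i => cases y with
    | inl j =>
      have hi := i.isLt; have hj := j.isLt
      simp only [stdRank] at h
      by_cases h1 : i = k
      · by_cases h2 : j = k
        · rw [h1, h2]
        · rw [if_pos h1, if_neg h2] at h; omega
      · by_cases h2 : j = k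
        · rw [if_neg h1, if_pos h2] at h; omega
        · rw [if_neg h1, if_neg h2] at h
          exact congrArg Sum.inl (Fin.ext h)
    | inr j =>
      have hi := i.isLt; have hj := j.isLt
      simp only [stdRank] at h
      by_cases h1 : i = k <;> by_cases h2 : j = k <;>
        simp only [if_pos, if_neg, h1, h2, if_true, if_false] at h <;> omega
  | inr i => cases y with
    | inl j =>
      have hi := i.isLt; have hj := j.isLt
      simp only [stdRank] at h
      by_cases h1 : i = k <;> by_cases h2 : j = k <;>
        simp only [if_pos, if_neg, h1, h2, if_true, if_false] at h <;> omega
    | inr j =>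
      have hi := i.isLt; have hj := j.isLt
      simp only [stdRank] at h
      by_cases h1 : i = k
      · by_cases h2 : j = k
        · rw [h1, h2]
        · rw [if_pos h1, if_neg h2] at h; omega
      · by_cases h2 : j = k
        · rw [if_neg h1, if_pos h2] at h; omega
        · rw [if_neg h1, if_neg h2] at h
          exact congrArg Sum.inr (Fin.ext (by omega))

theorem stdRank_mono (d : ℕ) (k : Fin d) {x y : StdEx d} (h : x ≤ y) :
    stdRank d k x ≤ stdRank d k y := by
  cases x with
  | inl i => cases y with
    | inl j =>
      have hij : i = j := h
      subst hij; exact le_refl _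
    | inr j =>
      have hij : i ≠ j := h
      have hi := i.isLt; have hj := j.isLt
      simp only [stdRank]
      by_cases h1 : i = k
      · rw [if_pos h1, if_neg (fun h2 => hij (h1.trans h2.symm))]
        omega
      · rw [if_neg h1]
        by_cases h2 : j = k
        · rw [if_pos h2]; omega
        · rw [if_neg h2]; omega
  | inr i => cases y with
    | inl j => exact absurd h (fun h => h)
    | inr j =>
      have hij : i = j := h
      subst hij; exact le_refl _

theorem stdL_isLinExt (d : ℕ) (k : Fin d) :
    IsLinExt (fun x y : StdEx d => stdRank d k x ≤ stdRank d k y) := by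
  refine ⟨?_, fun x y h => stdRank_mono d k h⟩
  exact { refl := fun x => le_refl _
          trans := fun x y z hxy hyz => le_trans hxy hyz
          antisymm := fun x y hxy hyx => stdRank_inj d k (le_antisymm hxy hyx)
          total := fun x y => le_total _ _ }

theorem stdL_realizer (d : ℕ) (hd : 2 ≤ d) :
    IsRealizer (fun (k : Fin d) (x y : StdEx d) => stdRank d k x ≤ stdRank d k y) := by
  refine ⟨fun k => stdL_isLinExt d k, fun x y => ⟨fun h k => stdRank_mono d k h, ?_⟩⟩
  intro h
  by_contra hxy
  cases x with
  | inl i => cases y with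
    | inl j =>
      have hij : i ≠ j := fun e => hxy e
      have hi := h i
      simp only [stdRank] at hi
      rw [if_neg (fun e : j = i => hij e.symm)] at hi
      simp only [if_true] at hi
      have := j.isLt; omega
    | inr j =>
      have hij : i = j := by by_contra hne; exact hxy hne
      subst hij
      have hi := h i
      simp only [stdRank] at hi
      simp only [if_true] at hi
      omega
  | inr i => cases y with
    | inl j =>
      have hnt : ∃ k : Fin d, k ≠ i := by
        refine ⟨if i = ⟨0, by omega⟩ then ⟨1, by omega⟩ else ⟨0, by omega⟩, ?_⟩
        by_cases h0 : i = ⟨0, by omega⟩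
        · rw [if_pos h0, h0]; simp [Fin.ext_iff]
        · rw [if_neg h0]; exact fun e => h0 e.symm
      obtain ⟨k, hk⟩ := hnt
      have hi := h k
      simp only [stdRank] at hi
      rw [if_neg (fun e : i = k => hk e.symm)] at hi
      by_cases h2 : j = k
      · rw [if_pos h2] at hi; omega
      · rw [if_neg h2] at hi; have := j.isLt; omega
    | inr j =>
      have hij : i ≠ j := fun e => hxy e
      have hi := h j
      simp only [stdRank] at hi
      rw [if_neg hij] at hi
      simp only [if_true] at hi
      omega

theorem stdL_lower (d d' : ℕ) (hd : 2 ≤ d)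
    (L : Fin d' → StdEx d → StdEx d → Prop) (hL : IsRealizer L) : d ≤ d' := by
  have hinc : ∀ i : Fin d, ∃ k, ¬ L k (stdA d i) (stdB d i) := by
    intro i
    by_contra h
    push_neg at h
    exact not_stdA_le_stdB i ((hL.2 _ _).mpr h)
  choose K hK using hinc
  have hKinj : Function.Injective K := by
    intro i j hij
    by_contra hne
    have hlin := (hL.1 (K i)).1
    have hext := (hL.1 (K i)).2
    have hbi : L (K i) (stdB d i) (stdA d i) := by
      rcases hlin.total (stdB d i) (stdA d i) with h | h
      · exact h
      · exact absurd h (hK i)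
    have hbj : L (K i) (stdB d j) (stdA d j) := by
      rcases hlin.total (stdB d j) (stdA d j) with h | h
      · exact h
      · exact absurd (hij ▸ h) (hK j)
    have h1 : L (K i) (stdA d i) (stdB d j) := hext _ _ (stdA_le_stdB hne)
    have h2 : L (K i) (stdA d j) (stdB d i) := hext _ _ (stdA_le_stdB (fun e => hne e.symm))
    have h3 : L (K i) (stdB d i) (stdB d j) := hlin.trans _ _ _ hbi h1
    have h4 : L (K i) (stdB d j) (stdB d i) := hlin.trans _ _ _ hbj h2
    have h5 : stdB d i = stdB d j := hlin.antisymm _ _ h3 h4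
    have h6 : (Sum.inr i : Fin d ⊕ Fin d) = Sum.inr j := h5
    exact hne (by injection h6)
  calc d = Fintype.card (Fin d) := (Fintype.card_fin d).symm
    _ ≤ Fintype.card (Fin d') := Fintype.card_le_of_injective K hKinj
    _ = d' := Fintype.card_fin d'

/-- For every `d ≥ 2`, the standard example `S_d` has order dimension exactly `d`. -/
theorem standard_example_dim (d : ℕ) (hd : 2 ≤ d) : pdim (StdEx d) = d := by
  have hmem : d ∈ {n | 0 < n ∧ ∃ L : Fin n → StdEx d → StdEx d → Prop, IsRealizer L} :=
    ⟨by omega, _, stdL_realizer d hd⟩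
  refine le_antisymm (Nat.sInf_le hmem) (le_csInf ⟨d, hmem⟩ ?_)
  rintro n ⟨-, L, hL⟩
  exact stdL_lower d n hd L hL
end

section
/- For a finite poset P and a set S of incomparable pairs of P, the following are equivalent: (1) there is no linear extension L of P reversing S (i.e., with x > y in L for all (x,y) ∈ S); (2) S contains an alternating cycle; (3) S contains a strict alternating cycle. -/
variable {α : Type*}

/-- An alternating cycle `(x_0,y_0), …, (x_{s-1},y_{s-1})` in `S`: `s ≥ 2` and
`x_i ≤ y_{i+1}` cyclically. -/
def IsAltCycle [PartialOrder α] (S : Set (α × α)) (s : ℕ) (x y : ℕ → α) : Prop :=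
  2 ≤ s ∧ (∀ i < s, (x i, y i) ∈ S) ∧ ∀ i < s, x i ≤ y ((i + 1) % s)

/-- A strict alternating cycle: additionally `x_i ≤ y_j` only when `j ≡ i + 1 (mod s)`. -/
def IsStrictAltCycle [PartialOrder α] (S : Set (α × α)) (s : ℕ) (x y : ℕ → α) : Prop :=
  IsAltCycle S s x y ∧ ∀ i < s, ∀ j < s, x i ≤ y j → j = (i + 1) % s


section AuxAltCycle
variable [PartialOrder α]

/-- Step relation between pairs: `p` steps to `q` when `p.1 ≤ q.2`. -/
def RpAux (S : Set (α × α)) (p q : α × α) : Prop :=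
  p ∈ S ∧ q ∈ S ∧ p.1 ≤ q.2

lemma path_of_rtg {S : Set (α × α)} {a b : α × α}
    (h : Relation.ReflTransGen (RpAux S) a b) :
    ∃ (n : ℕ) (g : ℕ → α × α), g 0 = a ∧ g n = b ∧ ∀ k < n, RpAux S (g k) (g (k+1)) := by
  induction h with
  | refl => exact ⟨0, fun _ => a, rfl, rfl, by omega⟩
  | @tail b c hab hbc ih =>
    obtain ⟨n, g, h0, hn, hstep⟩ := ih
    refine ⟨n+1, fun k => if k ≤ n then g k else c, by simp [h0], by simp, ?_⟩
    intro k hk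
    rcases Nat.lt_or_ge k n with h1 | h1
    · simpa [Nat.le_of_lt h1, Nat.succ_le_of_lt h1] using hstep k h1
    · have hkn : k = n := by omega
      subst hkn
      simpa [hn] using hbc

lemma altCycle_of_transGen {S : Set (α × α)} (hS : S ⊆ IncPairs α) {p : α × α}
    (h : Relation.TransGen (RpAux S) p p) : ∃ s x y, IsAltCycle S s x y := by
  obtain ⟨q, hpq, hqp⟩ := (Relation.TransGen.tail'_iff).mp h
  obtain ⟨n, g, h0, hn, hstep⟩ := path_of_rtg hpq
  rcases Nat.eq_zero_or_pos n with hn0 | hn0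
  · subst hn0
    have : q = p := by rw [← h0, ← hn]
    subst this
    exact absurd hqp.2.2 (hS hqp.1).1
  · refine ⟨n+1, fun k => (g k).1, fun k => (g k).2, by omega, ?_, ?_⟩
    · intro i hi
      rcases Nat.lt_or_ge i n with h1 | h1
      · exact (hstep i h1).1
      · have hin : i = n := by omega
        simpa [hin, hn] using hqp.1
    · intro i hi
      rcases Nat.lt_or_ge i n with h1 | h1
      · have : (i+1) % (n+1) = i+1 := Nat.mod_eq_of_lt (by omega)
        rw [this]
        exact (hstep i h1).2.2
      · have hin : i = n := by omega
        simp only [hin, Nat.mod_self, h0, hn]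
        exact hqp.2.2

lemma T_decomp {S : Set (α × α)} {a b : α}
    (h : Relation.TransGen (fun u v => u < v ∨ (v, u) ∈ S) a b) :
    a < b ∨ ∃ p q, p ∈ S ∧ q ∈ S ∧ a ≤ p.2 ∧ q.1 ≤ b ∧
      Relation.ReflTransGen (RpAux S) p q := by
  induction h with
  | @single c h =>
    rcases h with h | h
    · exact Or.inl h
    · exact Or.inr ⟨(c, a), (c, a), h, h, le_refl _, le_refl _, Relation.ReflTransGen.refl⟩
  | @tail b c hab hbc ih =>
    rcases ih with ih | ⟨p, q, hp, hq, hap, hqb, hchain⟩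
    · rcases hbc with h | h
      · exact Or.inl (lt_trans ih h)
      · exact Or.inr ⟨(c, b), (c, b), h, h, le_of_lt ih, le_refl _, Relation.ReflTransGen.refl⟩
    · rcases hbc with h | h
      · exact Or.inr ⟨p, q, hp, hq, hap, le_trans hqb (le_of_lt h), hchain⟩
      · refine Or.inr ⟨p, (c, b), hp, h, hap, le_refl _, hchain.tail ⟨hq, h, hqb⟩⟩

lemma reversible_of_no_cycle {S : Set (α × α)} (hS : S ⊆ IncPairs α)
    (hA : ¬ ∃ s x y, IsAltCycle S s x y) : Reversible S := by
  set B : α → α → Prop := fun u v => u < v ∨ (v, u) ∈ S with hB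
  have hirr : ∀ a, ¬ Relation.TransGen B a a := by
    intro a ha
    rcases T_decomp ha with h | ⟨p, q, hp, hq, hap, hqa, hchain⟩
    · exact lt_irrefl a h
    · refine hA (altCycle_of_transGen hS (p := p) ?_)
      exact Relation.TransGen.tail'_iff.mpr ⟨q, hchain, ⟨hq, hp, le_trans hqa hap⟩⟩
  set r0 : α → α → Prop := fun a b => a = b ∨ Relation.TransGen B a b with hr0
  haveI : IsPartialOrder α r0 :=
    { refl := fun a => Or.inl rfl
      trans := by
        rintro a b c (rfl | h1) (rfl | h2)
        · exact Or.inl rfl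
        · exact Or.inr h2
        · exact Or.inr h1
        · exact Or.inr (h1.trans h2)
      antisymm := by
        rintro a b (rfl | h1) (h2 | h2)
        · rfl
        · rfl
        · exact h2.symm
        · exact absurd (h1.trans h2) (hirr a) }
  obtain ⟨r, hlin, hle⟩ := extend_partialOrder r0
  haveI : IsLinearOrder α r := hlin
  refine ⟨r, ⟨hlin, ?_⟩, ?_⟩
  · intro x y hxy
    rcases eq_or_lt_of_le hxy with rfl | h
    · exact hle _ _ (Or.inl rfl)
    · exact hle _ _ (Or.inr (Relation.TransGen.single (Or.inl h)))
  · intro p hp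
    have h1 : r p.2 p.1 := by
      refine hle _ _ (Or.inr (Relation.TransGen.single (Or.inr ?_)))
      simpa using hp
    refine ⟨h1, fun h2 => ?_⟩
    have : p.1 = p.2 := antisymm h2 h1
    exact (hS hp).1 (this ▸ le_refl _)

lemma not_reversible_of_cycle {S : Set (α × α)} {s : ℕ} {x y : ℕ → α}
    (hc : IsAltCycle S s x y) : ¬ Reversible S := by
  rintro ⟨r, ⟨hlin, hext⟩, hrev⟩
  haveI : IsLinearOrder α r := hlin
  obtain ⟨hs, hmem, hlink⟩ := hc
  have key : ∀ k, 1 ≤ k → k ≤ s → r (x 0) (y (k % s)) := by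
    intro k
    induction k with
    | zero => omega
    | succ n ih =>
      intro _ hks
      rcases Nat.eq_zero_or_pos n with rfl | hn
      · have h1 : (0 + 1) % s = 1 % s := rfl
        exact hext _ _ (hlink 0 (by omega))
      · have hns : n < s := by omega
        have h1 : r (x 0) (y n) := by
          have := ih hn (by omega)
          rwa [Nat.mod_eq_of_lt hns] at this
        have h2 : r (y n) (x n) := (hrev (x n, y n) (hmem n hns)).1
        have h3 : r (x n) (y ((n + 1) % s)) := hext _ _ (hlink n hns)
        exact Trans.trans (Trans.trans h1 h2) h3
  have hfin := key s (by omega) le_rfl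
  rw [Nat.mod_self] at hfin
  exact (hrev (x 0, y 0) (hmem 0 (by omega))).2 hfin

lemma strict_of_cycle {S : Set (α × α)} (hS : S ⊆ IncPairs α)
    (h : ∃ s x y, IsAltCycle S s x y) :
    ∃ s x y, IsStrictAltCycle S s x y := by
  classical
  have h' : ∃ s, ∃ x, ∃ y, IsAltCycle S s x y := h
  set s := Nat.find h' with hsdef
  obtain ⟨x, y, hc⟩ := Nat.find_spec h'
  have hmin : ∀ t < s, ¬ ∃ x y, IsAltCycle S t x y := fun t ht => Nat.find_min h' ht
  obtain ⟨hs2, hmem, hlink⟩ := hc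
  refine ⟨s, x, y, ⟨hs2, hmem, hlink⟩, ?_⟩
  intro i hi j hj hxy
  by_contra hne
  have hij : i ≠ j := by
    rintro rfl
    exact (hS (hmem i hi)).1 hxy
  -- shortcut cycle of length t
  set m : ℕ := (i + s - j) % s with hm
  have hmval : m = if j ≤ i then i - j else i + s - j := by
    rcases le_or_gt j i with hji | hji
    · have e : i + s - j = (i - j) + s := by omega
      simp only [hm, e, Nat.add_mod_right, if_pos hji]
      exact Nat.mod_eq_of_lt (by omega)
    · simp only [hm, if_neg (not_le.mpr hji)]
      exact Nat.mod_eq_of_lt (by omega)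
  have hm1 : 1 ≤ m := by
    rcases le_or_gt j i with hji | hji
    · rw [hmval, if_pos hji]; omega
    · rw [hmval, if_neg (not_le.mpr hji)]; omega
  have hmlt : m < s - 1 := by
    have hmub : m ≤ s - 1 := by
      rcases le_or_gt j i with hji | hji
      · rw [hmval, if_pos hji]; omega
      · rw [hmval, if_neg (not_le.mpr hji)]; omega
    rcases lt_or_eq_of_le hmub with h1 | h1
    · exact h1
    · exfalso
      rcases le_or_gt j i with hji | hji
      · rw [if_pos hji] at hmval
        have : i = s - 1 ∧ j = 0 := by omega
        apply hne
        rw [this.2, this.1]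
        have e : s - 1 + 1 = s := by omega
        rw [e, Nat.mod_self]
      · rw [if_neg (not_le.mpr hji)] at hmval
        have hj1 : j = i + 1 := by omega
        apply hne
        rw [hj1, Nat.mod_eq_of_lt (by omega)]
  set t : ℕ := m + 1 with ht
  set f : ℕ → ℕ := fun k => (j + k) % s with hf
  have hflt : ∀ k, f k < s := fun k => Nat.mod_lt _ (by omega)
  have hft : f (t - 1) = i := by
    simp only [hf, ht, Nat.add_sub_cancel]
    rcases le_or_gt j i with hji | hji
    · rw [hmval, if_pos hji]
      have : j + (i - j) = i := by omega
      rw [this]; exact Nat.mod_eq_of_lt hi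
    · rw [hmval, if_neg (not_le.mpr hji)]
      have : j + (i + s - j) = i + s := by omega
      rw [this, Nat.add_mod_right]; exact Nat.mod_eq_of_lt hi
  have hcyc : IsAltCycle S t (fun k => x (f k)) (fun k => y (f k)) := by
    refine ⟨by omega, fun k hk => hmem (f k) (hflt k), ?_⟩
    intro k hk
    show x (f k) ≤ y (f ((k + 1) % t))
    rcases Nat.lt_or_ge k (t - 1) with h1 | h1
    · have e1 : (k + 1) % t = k + 1 := Nat.mod_eq_of_lt (by omega)
      rw [e1]
      have e2 : f (k + 1) = (f k + 1) % s := by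
        simp only [hf, Nat.mod_add_mod]
        ring_nf
      rw [e2]
      exact hlink (f k) (hflt k)
    · have hk1 : k = t - 1 := by omega
      have e1 : (k + 1) % t = 0 := by
        rw [hk1]
        have : t - 1 + 1 = t := by omega
        rw [this, Nat.mod_self]
      rw [e1, hk1, hft]
      have : f 0 = j := by simp [hf]; exact Nat.mod_eq_of_lt hj
      rw [this]
      exact hxy
  exact hmin t (by omega) ⟨_, _, hcyc⟩

end AuxAltCycle

/-- A set of incomparable pairs is non-reversible iff it contains an alternating cycle,
iff it contains a strict alternating cycle. -/
theorem not_reversible_iff_altCycle (α : Type*) [PartialOrder α] [Fintype α]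
    (S : Set (α × α)) (hS : S ⊆ IncPairs α) :
    (¬ Reversible S ↔ ∃ s x y, IsAltCycle S s x y) ∧
    (¬ Reversible S ↔ ∃ s x y, IsStrictAltCycle S s x y) := by
  have h1 : ¬ Reversible S ↔ ∃ s x y, IsAltCycle S s x y := by
    constructor
    · intro h
      by_contra hA
      exact h (reversible_of_no_cycle hS hA)
    · rintro ⟨s, x, y, hc⟩
      exact not_reversible_of_cycle hc
  refine ⟨h1, h1.trans ⟨fun h => strict_of_cycle hS h, ?_⟩⟩
  rintro ⟨s, x, y, hc⟩
  exact ⟨s, x, y, hc.1⟩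
end

section
/- Let k ≥ 2, let P be a finite poset excluding k+k, let h be the height of P, and let C = {c_1 < … < c_h} be a maximum chain. For 0 ≤ i ≤ h−1, the set Dn(i) of points z ∈ P − C such that i is the largest index with c_i < z (with i = 0 if z is above no point of C) induces a convex subposet of P of height at most 2k−2. -/
variable {α : Type*}

/-- The poset `k + k`: the disjoint sum of two `k`-element chains. -/
def TwoChains (k : ℕ) : Type := Fin k ⊕ Fin k

def TwoChains.le {k : ℕ} : TwoChains k → TwoChains k → Prop
  | .inl i, .inl j => i.1 ≤ j.1
  | .inr i, .inr j => i.1 ≤ j.1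
  | _, _ => False

theorem TwoChains.le_refl' {k : ℕ} (x : TwoChains k) : TwoChains.le x x := by
  cases x <;> simp [TwoChains.le]

theorem TwoChains.le_trans' {k : ℕ} (x y z : TwoChains k)
    (hxy : TwoChains.le x y) (hyz : TwoChains.le y z) : TwoChains.le x z := by
  cases x <;> cases y <;> cases z <;> simp_all [TwoChains.le] <;> omega

theorem TwoChains.le_antisymm' {k : ℕ} (x y : TwoChains k)
    (hxy : TwoChains.le x y) (hyx : TwoChains.le y x) : x = y := by
  cases x <;> cases y <;> simp_all [TwoChains.le] <;>
    exact congrArg _ (le_antisymm hxy hyx)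

instance (k : ℕ) : PartialOrder (TwoChains k) where
  le := TwoChains.le
  le_refl := TwoChains.le_refl'
  le_trans := TwoChains.le_trans'
  le_antisymm := TwoChains.le_antisymm'

/-- Given a chain `c : Fin h → α` (listing `c_1 < ⋯ < c_h`), `dnN c z` is the greatest
1-based index `i` with `c_i ≤ z`, and `0` if there is none. -/
noncomputable def dnN [PartialOrder α] {h : ℕ} (c : Fin h → α) (z : α) : ℕ :=
  {i : Fin h | c i ≤ z}.ncard

/-- `upN c z` is the least 1-based index `j` with `z ≤ c_j`, and `h + 1` if there is none. -/
noncomputable def upN [PartialOrder α] {h : ℕ} (c : Fin h → α) (z : α) : ℕ :=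
  h + 1 - {i : Fin h | z ≤ c i}.ncard

/-- A pair `(x, y)` is dangerous when `dn(x) < dn(y) < up(x) < up(y)`. -/
def Dangerous [PartialOrder α] {h : ℕ} (c : Fin h → α) (p : α × α) : Prop :=
  dnN c p.1 < dnN c p.2 ∧ dnN c p.2 < upN c p.1 ∧ upN c p.1 < upN c p.2

/-- `Dn(i)`: points outside the chain whose down-index is exactly `i`. -/
def Dn [PartialOrder α] {h : ℕ} (c : Fin h → α) (i : ℕ) : Set α :=
  {z | z ∉ Set.range c ∧ dnN c z = i}

/-- `Ar(i, i+1)`: points outside the chain with `dn(z) ≤ i` and `up(z) ≥ i + 1`. -/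
def Ar [PartialOrder α] {h : ℕ} (c : Fin h → α) (i : ℕ) : Set α :=
  {z | z ∉ Set.range c ∧ dnN c z ≤ i ∧ i + 1 ≤ upN c z}


section AuxLemmas

variable {β : Type*} [PartialOrder β]

lemma chain_card_le_pheight [Fintype β] (t : Finset β)
    (hchain : IsChain (· ≤ ·) (↑t : Set β)) : t.card ≤ pheight β := by
  have hb : BddAbove {n | ∃ t : Finset β, ↑t ⊆ (Set.univ : Set β) ∧
      IsChain (· ≤ ·) (↑t : Set β) ∧ t.card = n} := by
    refine ⟨Fintype.card β, ?_⟩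
    rintro n ⟨t, -, -, rfl⟩
    exact t.card_le_univ
  exact le_csSup hb ⟨t, by simp, hchain, rfl⟩

lemma strictMono_card_le_pheight [Fintype β] {n : ℕ} (f : Fin n → β)
    (hf : StrictMono f) : n ≤ pheight β := by
  classical
  have hch : IsChain (· ≤ ·) (↑(Finset.univ.image f) : Set β) := by
    rintro a ha b hb hab
    rw [Finset.mem_coe, Finset.mem_image] at ha hb
    obtain ⟨x, -, rfl⟩ := ha
    obtain ⟨y, -, rfl⟩ := hb
    rcases le_total x y with h | h
    · exact Or.inl (hf.monotone h)
    · exact Or.inr (hf.monotone h)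
  have := chain_card_le_pheight (Finset.univ.image f) hch
  rwa [Finset.card_image_of_injective _ hf.injective, Finset.card_univ,
    Fintype.card_fin] at this

/-- Concatenation of two finite sequences. -/
def glue {a b : ℕ} (f : Fin a → β) (g : Fin b → β) : Fin (a + b) → β :=
  fun x => if h : x.val < a then f ⟨x.val, h⟩ else g ⟨x.val - a, by
    have := x.isLt; omega⟩

lemma glue_strictMono {a b : ℕ} {f : Fin a → β} {g : Fin b → β}
    (hf : StrictMono f) (hg : StrictMono g) (hfg : ∀ x y, f x < g y) :
    StrictMono (glue f g) := by
  intro p q hpq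
  have hpq' : p.val < q.val := hpq
  unfold glue
  split_ifs with h1 h2 h2
  · exact hf (show (⟨p.1, h1⟩ : Fin a) < ⟨q.1, h2⟩ from hpq')
  · exact hfg _ _
  · omega
  · exact hg (show (⟨p.1 - a, _⟩ : Fin b) < ⟨q.1 - a, _⟩ by
      simp only [Fin.mk_lt_mk]; omega)

lemma dn_char {h : ℕ} (c : Fin h → β) (hc : StrictMono c) {z : β} {i : ℕ}
    (hz : dnN c z = i) (j : Fin h) : c j ≤ z ↔ j.val < i := by
  classical
  have hfin : {j : Fin h | c j ≤ z}.Finite := Set.toFinite _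
  have hcard : (hfin.toFinset).card = i := by
    rw [← Set.ncard_eq_toFinset_card _ hfin]; exact hz
  constructor
  · intro hle
    have hsub : Finset.Iic j ⊆ hfin.toFinset := by
      intro j' hj'
      rw [Finset.mem_Iic] at hj'
      rw [Set.Finite.mem_toFinset]
      exact le_trans (hc.monotone hj') hle
    have := Finset.card_le_card hsub
    rw [Fin.card_Iic, hcard] at this
    omega
  · intro hlt
    by_contra hle
    have hsub : hfin.toFinset ⊆ Finset.Iio j := by
      intro j' hj'
      rw [Set.Finite.mem_toFinset] at hj'
      rw [Finset.mem_Iio]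
      by_contra hge
      push_neg at hge
      exact hle (le_trans (hc.monotone hge) hj')
    have := Finset.card_le_card hsub
    rw [Fin.card_Iio, hcard] at this
    omega

lemma chain_enum (t : Finset β) (hchain : IsChain (· ≤ ·) (↑t : Set β)) :
    ∃ z : Fin t.card → β, StrictMono z ∧ ∀ x, z x ∈ t := by
  classical
  letI : LinearOrder {x // x ∈ t} :=
    { (inferInstance : PartialOrder {x // x ∈ t}) with
      le_total := by
        intro a b
        rcases eq_or_ne a b with rfl | hne
        · exact Or.inl le_rfl
        · have ha : (a : β) ∈ (↑t : Set β) := a.2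
          have hb : (b : β) ∈ (↑t : Set β) := b.2
          rcases hchain ha hb (fun he => hne (Subtype.ext he)) with h | h
          · exact Or.inl h
          · exact Or.inr h
      toDecidableLE := Classical.decRel _
      toDecidableEq := Classical.decEq _
      toDecidableLT := Classical.decRel _ }
  let e := monoEquivOfFin {x // x ∈ t} (Fintype.card_coe t)
  refine ⟨fun x => (e x : β), ?_, fun x => (e x).2⟩
  intro p q hpq
  exact Subtype.coe_lt_coe.mpr (e.strictMono hpq)

end AuxLemmas

/-- If `P` excludes `k + k` and `C = {c_1 < ⋯ < c_h}` is a maximum chain, then for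
`0 ≤ i ≤ h − 1` the set `Dn(i)` is convex and has height at most `2k − 2`. -/
theorem dn_convex_height_le {α : Type*} [PartialOrder α] [Fintype α] (k : ℕ) (hk : 2 ≤ k)
    (hexc : ¬ Nonempty (TwoChains k ↪o α))
    (c : Fin (pheight α) → α) (hc : StrictMono c)
    (i : ℕ) (hi : i ≤ pheight α - 1) :
    (Dn c i).OrdConnected ∧ heightSet (Dn c i) ≤ 2 * k - 2 := by
  classical
  constructor
  · -- convexity
    refine ⟨fun x hx y hy w hw => ?_⟩
    obtain ⟨hxr, hxd⟩ := hx
    obtain ⟨hyr, hyd⟩ := hy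
    have hdw : dnN c w = i := by
      have m1 : dnN c x ≤ dnN c w :=
        Set.ncard_le_ncard (fun j hj => le_trans hj hw.1) (Set.toFinite _)
      have m2 : dnN c w ≤ dnN c y :=
        Set.ncard_le_ncard (fun j hj => le_trans hj hw.2) (Set.toFinite _)
      omega
    refine ⟨?_, hdw⟩
    rintro ⟨j, hj⟩
    have hjlt : j.val < i := (dn_char c hc hyd j).1 (hj ▸ hw.2)
    have h1 : c j ≤ x := (dn_char c hc hxd j).2 hjlt
    have h2 : x ≤ c j := hj ▸ hw.1
    exact hxr ⟨j, le_antisymm h1 h2⟩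
  · -- height bound
    rcases isEmpty_or_nonempty α with hE | hNE
    · apply csSup_le'
      rintro n ⟨t, -, -, rfl⟩
      have h1 : t.card ≤ Fintype.card α := t.card_le_univ
      have h2 : Fintype.card α = 0 := Fintype.card_eq_zero
      omega
    · have h1 : 1 ≤ pheight α := by
        refine strictMono_card_le_pheight (fun _ : Fin 1 => Classical.arbitrary α) ?_
        intro p q hpq
        have hp := p.isLt
        have hq := q.isLt
        have : p.val < q.val := hpq
        omega
      have hi' : i < pheight α := by omega
      apply csSup_le'
      rintro n ⟨t, hsub, hchain, rfl⟩
      obtain ⟨z, hz, hzt⟩ := chain_enum t hchain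
      have hzD : ∀ x, z x ∈ Dn c i := fun x => hsub (hzt x)
      have hchar : ∀ (x : Fin t.card) (j : Fin (pheight α)), c j ≤ z x ↔ j.val < i :=
        fun x j => dn_char c hc (hzD x).2 j
      have hznr : ∀ x, z x ∉ Set.range c := fun x => (hzD x).1
      -- the prefix of the chain below everything in `t`
      let f1 : Fin i → α := fun x => c ⟨x.val, by have := x.isLt; omega⟩
      have hf1 : StrictMono f1 := fun p q hpq => hc hpq
      have hf1z : ∀ (x : Fin i) (y : Fin t.card), f1 x < z y := by
        intro x y
        have hle : f1 x ≤ z y := (hchar y _).2 x.isLt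
        exact lt_of_le_of_ne hle (fun he => hznr y ⟨_, he⟩)
      have hA : i + t.card ≤ pheight α :=
        strictMono_card_le_pheight (glue f1 z) (glue_strictMono hf1 hz hf1z)
      by_contra hbig
      push_neg at hbig
      have hm : 2 * k - 1 ≤ t.card := by omega
      -- key: if `z x ≤ c j` then the combined chain forces a bound
      have hkey : ∀ (x : Fin t.card) (j : Fin (pheight α)), z x ≤ c j →
          i + (x.val + 1) + (pheight α - j.val) ≤ pheight α := by
        intro x j hle
        have hij : i ≤ j.val := by
          by_contra hlt
          push_neg at hlt
          have hcj : c j ≤ z x := (hchar x j).2 hlt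
          exact hznr x ⟨j, le_antisymm hcj hle⟩
        let f2 : Fin (x.val + 1) → α :=
          fun y => z ⟨y.val, by have := x.isLt; have := y.isLt; omega⟩
        have hf2 : StrictMono f2 := fun p q hpq => hz hpq
        let f3 : Fin (pheight α - j.val) → α :=
          fun y => c ⟨j.val + y.val, by have := y.isLt; omega⟩
        have hf3 : StrictMono f3 := by
          intro p q hpq
          have hpq' : p.val < q.val := hpq
          refine hc ?_
          simp only [Fin.mk_lt_mk]
          omega
        have h12 : ∀ p q, f1 p < f2 q := fun p q => hf1z p _
        have h13 : ∀ (p : Fin i) (q : Fin (pheight α - j.val)), f1 p < f3 q := by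
          intro p q
          have hp := p.isLt
          refine hc ?_
          simp only [Fin.mk_lt_mk]
          omega
        have h23 : ∀ (p : Fin (x.val + 1)) (q : Fin (pheight α - j.val)), f2 p < f3 q := by
          intro p q
          have hp := p.isLt
          have ha1 : f2 p ≤ z x := by
            refine hz.monotone ?_
            simp only [Fin.mk_le_mk, Fin.le_def]
            omega
          have ha2 : c j ≤ f3 q := by
            refine hc.monotone ?_
            simp only [Fin.le_def]
            omega
          have hle2 : f2 p ≤ f3 q := le_trans ha1 (le_trans hle ha2)
          exact lt_of_le_of_ne hle2 (fun he => hznr _ ⟨_, he.symm⟩)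
        have hg12 : StrictMono (glue f1 f2) := glue_strictMono hf1 hf2 h12
        have hcross : ∀ p q, glue f1 f2 p < f3 q := by
          intro p q
          unfold glue
          split_ifs with hp
          · exact h13 _ _
          · exact h23 _ _
        have := strictMono_card_le_pheight _ (glue_strictMono hg12 hf3 hcross)
        omega
      have hik : i + k ≤ pheight α := by omega
      -- build a copy of `k + k`
      let a : Fin k → α := fun r => z ⟨t.card - k + r.val, by have := r.isLt; omega⟩
      let b : Fin k → α := fun s => c ⟨i + s.val, by have := s.isLt; omega⟩
      have ha : StrictMono a := by
        intro p q hpq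
        have hpq' : p.val < q.val := hpq
        refine hz ?_
        simp only [Fin.mk_lt_mk]
        omega
      have hb : StrictMono b := by
        intro p q hpq
        have hpq' : p.val < q.val := hpq
        refine hc ?_
        simp only [Fin.mk_lt_mk]
        omega
      have hinc : ∀ (r s : Fin k), ¬ (a r ≤ b s) ∧ ¬ (b s ≤ a r) := by
        intro r s
        have hr := r.isLt
        have hs := s.isLt
        constructor
        · intro hle
          have hq : i + (t.card - k + r.val + 1) + (pheight α - (i + s.val)) ≤ pheight α :=
            hkey ⟨t.card - k + r.val, by omega⟩ ⟨i + s.val, by omega⟩ hle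
          omega
        · intro hle
          have hq : i + s.val < i :=
            (hchar ⟨t.card - k + r.val, by omega⟩ ⟨i + s.val, by omega⟩).1 hle
          omega
      apply hexc
      let f : TwoChains k → α := fun x => Sum.elim a b x
      refine ⟨OrderEmbedding.ofMapLEIff f ?_⟩
      intro x y
      rcases x with r | r <;> rcases y with s | s
      · show a r ≤ a s ↔ TwoChains.le (.inl r) (.inl s)
        rw [ha.le_iff_le]
        exact Iff.rfl
      · exact iff_of_false (hinc r s).1 (fun h => h)
      · exact iff_of_false (hinc s r).2 (fun h => h)
      · show b r ≤ b s ↔ TwoChains.le (.inr r) (.inr s)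
        rw [hb.le_iff_le]
        exact Iff.rfl
end

section
/- Let k ≥ 2, let P be a finite poset excluding k+k, with height h and maximum chain C = {c_1 < … < c_h}. For 0 ≤ i ≤ i+m ≤ h−1, the subposet Dn(i,m) = Dn(i) ∪ … ∪ Dn(i+m) ∪ {c_{i+1},…,c_{i+m}} is convex in P and has height at most m + 2k − 2. -/
variable {α : Type*}

/-- `Dn(i, m) = Dn(i) ∪ ⋯ ∪ Dn(i+m) ∪ {c_{i+1}, …, c_{i+m}}`. -/
def DnM {α : Type*} [PartialOrder α] {h : ℕ} (c : Fin h → α) (i m : ℕ) : Set α :=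
  {z | z ∉ Set.range c ∧ i ≤ dnN c z ∧ dnN c z ≤ i + m} ∪
    {x | ∃ j : Fin h, x = c j ∧ i ≤ j.1 ∧ j.1 + 1 ≤ i + m}
section Aux

open Finset

lemma downclosed_ncard {n : ℕ} (S : Set (Fin n))
    (hS : ∀ ⦃a b : Fin n⦄, a ≤ b → b ∈ S → a ∈ S) (t : Fin n) :
    t ∈ S ↔ t.1 < S.ncard := by
  classical
  constructor
  · intro ht
    have hsub : (Set.Iic t) ⊆ S := fun a ha => hS ha ht
    have h1 : (Set.Iic t).ncard ≤ S.ncard := Set.ncard_le_ncard hsub (Set.toFinite S)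
    have h2 : (Set.Iic t).ncard = t.1 + 1 := by
      rw [← Finset.coe_Iic, Set.ncard_coe_finset, Fin.card_Iic]
    omega
  · intro ht
    by_contra hmem
    have hsub : S ⊆ Set.Iio t := by
      intro a ha
      rcases lt_or_ge a t with hlt | hle
      · exact hlt
      · exact absurd (hS hle ha) hmem
    have h1 : S.ncard ≤ (Set.Iio t).ncard := Set.ncard_le_ncard hsub (Set.toFinite _)
    have h2 : (Set.Iio t).ncard = t.1 := by
      rw [← Finset.coe_Iio, Set.ncard_coe_finset, Fin.card_Iio]
    omega

lemma upclosed_ncard {n : ℕ} (S : Set (Fin n))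
    (hS : ∀ ⦃a b : Fin n⦄, a ≤ b → a ∈ S → b ∈ S) (t : Fin n) :
    t ∈ S ↔ n - S.ncard ≤ t.1 := by
  classical
  have hSn : S.ncard ≤ n := by
    have := Set.ncard_le_ncard (Set.subset_univ S) (Set.toFinite _)
    simpa [Set.ncard_univ] using this
  constructor
  · intro ht
    have hsub : (Set.Ici t) ⊆ S := fun a ha => hS ha ht
    have h1 : (Set.Ici t).ncard ≤ S.ncard := Set.ncard_le_ncard hsub (Set.toFinite S)
    have h2 : (Set.Ici t).ncard = n - t.1 := by
      rw [← Finset.coe_Ici, Set.ncard_coe_finset, Fin.card_Ici]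
    omega
  · intro ht
    by_contra hmem
    have hsub : S ⊆ Set.Ioi t := by
      intro a ha
      rcases lt_or_ge t a with hlt | hle
      · exact hlt
      · exact absurd (hS hle ha) hmem
    have h1 : S.ncard ≤ (Set.Ioi t).ncard := Set.ncard_le_ncard hsub (Set.toFinite _)
    have h2 : (Set.Ioi t).ncard = n - 1 - t.1 := by
      rw [← Finset.coe_Ioi, Set.ncard_coe_finset, Fin.card_Ioi]
    have : t.1 < n := t.2
    omega

variable {α : Type*} [PartialOrder α] {h : ℕ} {c : Fin h → α}

lemma dnN_le (c : Fin h → α) (z : α) : dnN c z ≤ h := by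
  have := Set.ncard_le_ncard (Set.subset_univ {i : Fin h | c i ≤ z}) (Set.toFinite _)
  simpa [dnN, Set.ncard_univ, Nat.card_eq_fintype_card] using this

lemma upN_le (c : Fin h → α) (z : α) : upN c z ≤ h + 1 := by
  simp only [upN]; omega

lemma upN_ncard (c : Fin h → α) (z : α) :
    {i : Fin h | z ≤ c i}.ncard = h + 1 - upN c z := by
  have := Set.ncard_le_ncard (Set.subset_univ {i : Fin h | z ≤ c i}) (Set.toFinite _)
  simp only [Set.ncard_univ, Nat.card_eq_fintype_card, Fintype.card_fin] at this
  simp only [upN]; omega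

lemma le_dn_iff (hc : StrictMono c) (z : α) (t : Fin h) :
    c t ≤ z ↔ t.1 < dnN c z :=
  downclosed_ncard {i : Fin h | c i ≤ z}
    (fun _ _ hab hb => le_trans (hc.monotone hab) hb) t

lemma le_up_iff (hc : StrictMono c) (z : α) (t : Fin h) :
    z ≤ c t ↔ upN c z ≤ t.1 + 1 := by
  have hK := upN_ncard c z
  have hK2 := Set.ncard_le_ncard (Set.subset_univ {i : Fin h | z ≤ c i}) (Set.toFinite _)
  simp only [Set.ncard_univ, Nat.card_eq_fintype_card, Fintype.card_fin] at hK2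
  have h1 : upN c z ≤ h + 1 := upN_le c z
  have := upclosed_ncard {i : Fin h | z ≤ c i}
    (fun _ _ hab ha => le_trans ha (hc.monotone hab)) t
  simp only [Set.mem_setOf_eq] at this ⊢
  rw [this, hK]
  omega

lemma dn_mono {z w : α} (hzw : z ≤ w) : dnN c z ≤ dnN c w :=
  Set.ncard_le_ncard (fun _ ht => le_trans ht hzw) (Set.toFinite _)

lemma up_mono {z w : α} (hzw : z ≤ w) : upN c z ≤ upN c w := by
  have : {i : Fin h | w ≤ c i} ⊆ {i : Fin h | z ≤ c i} :=
    fun _ ht => le_trans hzw ht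
  have := Set.ncard_le_ncard this (Set.toFinite _)
  simp only [upN]; omega

lemma dn_lt_up {z : α} (hz : z ∉ Set.range c) : dnN c z < upN c z := by
  have hd : Disjoint {i : Fin h | c i ≤ z} {i : Fin h | z ≤ c i} := by
    rw [Set.disjoint_left]
    intro t ht1 ht2
    exact hz ⟨t, le_antisymm ht1 ht2⟩
  have hcard : {i : Fin h | c i ≤ z}.ncard + {i : Fin h | z ≤ c i}.ncard ≤ h := by
    have := Set.ncard_union_eq hd (Set.toFinite _) (Set.toFinite _)
    have h2 := Set.ncard_le_ncard (Set.subset_univ ({i : Fin h | c i ≤ z} ∪ {i : Fin h | z ≤ c i})) (Set.toFinite _)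
    simp only [Set.ncard_univ, Nat.card_eq_fintype_card, Fintype.card_fin] at h2
    omega
  have h1 := upN_ncard c z
  have h2 := upN_le c z
  simp only [dnN] at *
  omega

lemma dn_c (hc : StrictMono c) (j : Fin h) : dnN c (c j) = j.1 + 1 := by
  have : {i : Fin h | c i ≤ c j} = Set.Iic j := by
    ext t; simp [hc.le_iff_le]
  rw [dnN, this, ← Finset.coe_Iic, Set.ncard_coe_finset, Fin.card_Iic]

end Aux
lemma exists_sorted_chain {α : Type*} [PartialOrder α] :
    ∀ (n : ℕ) (t : Finset α), t.card = n → IsChain (· ≤ ·) (↑t : Set α) →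
      ∃ g : Fin n → α, StrictMono g ∧ ∀ x, x ∈ t ↔ ∃ q, g q = x := by
  classical
  intro n
  induction n with
  | zero =>
    intro t htc _
    refine ⟨Fin.elim0, fun q => q.elim0, fun x => ?_⟩
    rw [Finset.card_eq_zero.mp htc]
    simp only [Finset.notMem_empty, false_iff]
    rintro ⟨q, -⟩; exact q.elim0
  | succ n ih =>
    intro t htc hch
    have hne : t.Nonempty := Finset.card_pos.mp (by omega)
    obtain ⟨mx, hmxt, hmax⟩ := t.exists_maximal hne
    have hlt : ∀ x ∈ t, x ≠ mx → x < mx := by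
      intro x hx hne'
      rcases hch hx hmxt hne' with h1 | h1
      · exact lt_of_le_of_ne h1 hne'
      · exact absurd (lt_of_le_of_ne h1 (Ne.symm hne')) (fun hlt => hlt.not_ge (hmax hx hlt.le))
    have hrc : (t.erase mx).card = n := by
      rw [Finset.card_erase_of_mem hmxt]; omega
    have hrch : IsChain (· ≤ ·) (↑(t.erase mx) : Set α) :=
      IsChain.mono (by simp [Finset.coe_subset]) hch
    obtain ⟨g, hg, hgm⟩ := ih (t.erase mx) hrc hrch
    have hglt : ∀ j : Fin n, g j < mx := by
      intro j
      have : g j ∈ t.erase mx := (hgm (g j)).mpr ⟨j, rfl⟩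
      exact hlt _ (Finset.mem_of_mem_erase this) (Finset.ne_of_mem_erase this)
    refine ⟨Fin.snoc g mx, ?_, ?_⟩
    · intro q q' hqq'
      rcases Fin.eq_castSucc_or_eq_last q' with ⟨j, rfl⟩ | rfl
      · have hql : q.1 < j.1 := hqq'
        have hq : q = Fin.castSucc ⟨q.1, by omega⟩ := by
          ext; simp
        rw [hq, Fin.snoc_castSucc, Fin.snoc_castSucc]
        exact hg (by simpa [Fin.lt_def] using hql)
      · have hq : q = Fin.castSucc ⟨q.1, by
          have := q.2
          rcases Nat.lt_succ_iff_lt_or_eq.mp q.2 with h1 | h1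
          · exact h1
          · exact absurd (Fin.ext h1 : q = Fin.last n) (Fin.ne_last_of_lt hqq')⟩ := by
          ext; simp
        rw [hq, Fin.snoc_castSucc, Fin.snoc_last]
        exact hglt _
    · intro x
      constructor
      · intro hx
        by_cases hxm : x = mx
        · exact ⟨Fin.last n, by rw [Fin.snoc_last, hxm]⟩
        · obtain ⟨q, hq⟩ := (hgm x).mp (Finset.mem_erase.mpr ⟨hxm, hx⟩)
          exact ⟨Fin.castSucc q, by rw [Fin.snoc_castSucc, hq]⟩
      · rintro ⟨q, rfl⟩
        rcases Fin.eq_castSucc_or_eq_last q with ⟨j, rfl⟩ | rfl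
        · rw [Fin.snoc_castSucc]
          exact Finset.mem_of_mem_erase ((hgm (g j)).mpr ⟨j, rfl⟩)
        · rw [Fin.snoc_last]; exact hmxt
lemma card_filter_lt_fin (n a : ℕ) :
    (Finset.univ.filter fun q : Fin n => q.1 < a).card = min a n := by
  classical
  rw [← Finset.card_range (min a n)]
  apply Finset.card_bij (fun (q : Fin n) _ => q.1)
  · intro q hq
    simp only [Finset.mem_filter] at hq
    simp only [Finset.mem_range]
    exact lt_min hq.2 q.2
  · intro q hq q' hq' hqq'
    exact Fin.ext hqq'
  · intro b hb
    simp only [Finset.mem_range, lt_min_iff] at hb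
    exact ⟨⟨b, hb.2⟩, by simp [hb.1], rfl⟩

lemma card_filter_ge_fin (n a : ℕ) :
    (Finset.univ.filter fun q : Fin n => a ≤ q.1).card = n - a := by
  classical
  have h1 := Finset.card_filter_add_card_filter_not
    (s := (Finset.univ : Finset (Fin n))) (p := fun q : Fin n => q.1 < a)
  have h2 : (Finset.univ.filter fun q : Fin n => ¬ q.1 < a) =
      (Finset.univ.filter fun q : Fin n => a ≤ q.1) := by
    apply Finset.filter_congr; intro q _; simp [not_lt]
  rw [card_filter_lt_fin] at h1
  rw [← h2]
  simp only [Finset.card_univ, Fintype.card_fin] at h1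
  omega

lemma card_le_pheight {α : Type*} [PartialOrder α] [Fintype α] (t : Finset α)
    (ht : IsChain (· ≤ ·) (↑t : Set α)) : t.card ≤ pheight α := by
  apply le_csSup
  · refine ⟨Fintype.card α, ?_⟩
    rintro n ⟨s, -, -, rfl⟩
    exact Finset.card_le_univ s
  · exact ⟨t, Set.subset_univ _, ht, rfl⟩
/-- If `P` excludes `k + k` and `C` is a maximum chain, then for `0 ≤ i ≤ i + m ≤ h − 1`
the subposet `Dn(i, m)` is convex and has height at most `m + 2k − 2`. -/
theorem dnM_convex_height_le {α : Type*} [PartialOrder α] [Fintype α] (k : ℕ) (hk : 2 ≤ k)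
    (hexc : ¬ Nonempty (TwoChains k ↪o α))
    (c : Fin (pheight α) → α) (hc : StrictMono c)
    (i m : ℕ) (him : i + m ≤ pheight α - 1) :
    (DnM c i m).OrdConnected ∧ heightSet (DnM c i m) ≤ m + 2 * k - 2 := by
  classical
  have hdec : ∀ x, x ∈ DnM c i m →
      (x ∉ Set.range c ∧ i ≤ dnN c x ∧ dnN c x ≤ i + m) ∨
      (∃ j : Fin (pheight α), x = c j ∧ i ≤ j.1 ∧ j.1 + 1 ≤ i + m) := fun x hx => hx
  constructor
  · -- convexity
    constructor
    intro x hx z hz y hy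
    have hxy : x ≤ y := hy.1
    have hyz : y ≤ z := hy.2
    by_cases hyr : y ∈ Set.range c
    · obtain ⟨j, rfl⟩ := hyr
      refine Or.inr ⟨j, rfl, ?_, ?_⟩
      · rcases hdec x hx with hx' | ⟨j0, rfl, hj0i, -⟩
        · have hdn : dnN c x ≤ j.1 := by
            by_contra hcon
            push_neg at hcon
            exact hx'.1 ⟨j, (le_antisymm ((le_dn_iff hc x j).mpr hcon) hxy)⟩
          exact le_trans hx'.2.1 hdn
        · exact le_trans hj0i ((hc.le_iff_le).mp hxy)
      · rcases hdec z hz with hz' | ⟨j1, rfl, -, hj1⟩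
        · have h1 := (le_dn_iff hc z j).mp hyz
          have h2 := hz'.2.2
          omega
        · have h1 : j.1 ≤ j1.1 := (hc.le_iff_le).mp hyz
          omega
    · refine Or.inl ⟨hyr, ?_, ?_⟩
      · rcases hdec x hx with hx' | ⟨j0, rfl, hj0, -⟩
        · exact le_trans hx'.2.1 (dn_mono hxy)
        · have h1 := (le_dn_iff hc y j0).mp hxy
          omega
      · rcases hdec z hz with hz' | ⟨j1, rfl, -, hj1⟩
        · exact le_trans (dn_mono hyz) hz'.2.2
        · have h1 : dnN c y ≤ dnN c (c j1) := dn_mono hyz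
          rw [dn_c hc] at h1
          omega
  · -- height bound
    apply csSup_le
    · exact ⟨0, ⟨∅, by simp, by simp, rfl⟩⟩
    rintro n ⟨t, hts, htch, rfl⟩
    have hmem : ∀ x ∈ t, (x ∉ Set.range c ∧ i ≤ dnN c x ∧ dnN c x ≤ i + m) ∨
        (∃ j : Fin (pheight α), x = c j ∧ i ≤ j.1 ∧ j.1 + 1 ≤ i + m) :=
      fun x hx => hdec x (hts hx)
    have hiH : i ≤ pheight α := by omega
    set Z := t.filter (fun x => x ∉ Set.range c) with hZdef
    set Pc := t.filter (fun x => x ∈ Set.range c) with hPdef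
    have hsplit0 : Pc.card + Z.card = t.card := by
      rw [hPdef, hZdef]
      exact Finset.card_filter_add_card_filter_not (p := fun x => x ∈ Set.range c)
    have hPmem : ∀ x ∈ Pc, ∃ j : Fin (pheight α), x = c j ∧ i ≤ j.1 ∧ j.1 + 1 ≤ i + m := by
      intro x hx
      rw [hPdef, Finset.mem_filter] at hx
      rcases hmem x hx.1 with h | h
      · exact absurd hx.2 h.1
      · exact h
    have hidx : ∀ j : Fin (pheight α), dnN c (c j) - 1 = j.1 := by
      intro j; rw [dn_c hc]
      omega
    have hPcard : Pc.card ≤ m := by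
      have h1 : Pc.card ≤ (Finset.Ico i (i + m)).card := by
        apply Finset.card_le_card_of_injOn (fun x => dnN c x - 1)
        · intro x hx
          obtain ⟨j, rfl, hj1, hj2⟩ := hPmem x hx
          simp only [Finset.mem_coe, hidx j, Finset.mem_Ico]
          omega
        · intro x hx y hy hxy
          obtain ⟨j, rfl, -, -⟩ := hPmem x hx
          obtain ⟨j', rfl, -, -⟩ := hPmem y hy
          simp only [hidx j, hidx j'] at hxy
          exact congrArg c (Fin.ext hxy)
      rw [Nat.card_Ico] at h1
      omega
    have hZmem : ∀ x ∈ Z, x ∉ Set.range c ∧ i ≤ dnN c x ∧ dnN c x ≤ i + m := by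
      intro x hx
      rw [hZdef, Finset.mem_filter] at hx
      rcases hmem x hx.1 with h | h
      · exact h
      · obtain ⟨j, rfl, -, -⟩ := h
        exact absurd ⟨j, rfl⟩ hx.2
    have hZch : IsChain (· ≤ ·) (↑Z : Set α) :=
      htch.mono (by rw [hZdef]; exact_mod_cast Finset.filter_subset _ t)
    obtain ⟨g, hg, hgm⟩ := exists_sorted_chain Z.card Z rfl hZch
    rcases Nat.lt_or_ge Z.card k with hrk | hrk
    · omega
    have hsk : Z.card - k < Z.card := by omega
    set zs := g ⟨Z.card - k, hsk⟩ with hzsdef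
    have hzsZ : zs ∈ Z := (hgm zs).mpr ⟨_, rfl⟩
    have hzs := hZmem zs hzsZ
    have hzs_t : zs ∈ t := Finset.mem_of_mem_filter _ hzsZ
    set U := upN c zs with hUdef
    have hU1 : dnN c zs < U := dn_lt_up hzs.1
    have hUh : U ≤ pheight α + 1 := upN_le c zs
    -- exclusion: U ≤ i + m + k
    have hUle : U ≤ i + m + k := by
      by_contra hcon
      push_neg at hcon
      have hHk : i + m + k ≤ pheight α := by omega
      refine hexc ⟨?_⟩
      have hka : ∀ a : Fin k, Z.card - k + a.1 < Z.card := fun a => by have := a.2; omega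
      have hkc : ∀ a : Fin k, i + m + a.1 < pheight α := fun a => by have := a.2; omega
      have hglemma : ∀ a : Fin k, zs ≤ g ⟨Z.card - k + a.1, hka a⟩ := by
        intro a
        rw [hzsdef]
        exact hg.monotone (Fin.mk_le_mk.mpr (by omega))
      have hgZ : ∀ a : Fin k, g ⟨Z.card - k + a.1, hka a⟩ ∈ Z :=
        fun a => (hgm _).mpr ⟨_, rfl⟩
      refine { toFun := Sum.elim (fun a : Fin k => g ⟨Z.card - k + a.1, hka a⟩) (fun a : Fin k => c ⟨i + m + a.1, hkc a⟩), inj' := ?_, map_rel_iff' := ?_ }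
      · rintro (a | a) (b | b) heq <;> simp only [Sum.elim_inl, Sum.elim_inr] at heq
        · have h2 : Z.card - k + a.1 = Z.card - k + b.1 := congrArg Fin.val (hg.injective heq)
          exact congrArg Sum.inl (Fin.ext (by omega))
        · exact absurd ⟨_, heq.symm⟩ (hZmem _ (hgZ a)).1
        · exact absurd ⟨_, heq⟩ (hZmem _ (hgZ b)).1
        · have h2 : i + m + a.1 = i + m + b.1 := congrArg Fin.val (hc.injective heq)
          exact congrArg Sum.inr (Fin.ext (by omega))
      · rintro (a | a) (b | b)
        · change g ⟨Z.card - k + a.1, hka a⟩ ≤ g ⟨Z.card - k + b.1, hka b⟩ ↔ _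
          rw [hg.le_iff_le]
          show _ ↔ TwoChains.le _ _
          simp only [TwoChains.le, Fin.mk_le_mk]
          omega
        · change g ⟨Z.card - k + a.1, hka a⟩ ≤ c ⟨i + m + b.1, hkc b⟩ ↔ _
          show _ ↔ TwoChains.le _ _
          simp only [TwoChains.le, iff_false]
          intro hle
          have h2 : upN c (g ⟨Z.card - k + a.1, hka a⟩) ≤ (i + m + b.1) + 1 :=
            (le_up_iff hc _ _).mp hle
          have h3 : U ≤ upN c (g ⟨Z.card - k + a.1, hka a⟩) := up_mono (hglemma a)
          have := b.2
          omega
        · change c ⟨i + m + a.1, hkc a⟩ ≤ g ⟨Z.card - k + b.1, hka b⟩ ↔ _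
          show _ ↔ TwoChains.le _ _
          simp only [TwoChains.le, iff_false]
          intro hle
          have h2 : i + m + a.1 < dnN c (g ⟨Z.card - k + b.1, hka b⟩) :=
            (le_dn_iff hc _ _).mp hle
          have h3 := (hZmem _ (hgZ b)).2.2
          omega
        · change c ⟨i + m + a.1, hkc a⟩ ≤ c ⟨i + m + b.1, hkc b⟩ ↔ _
          rw [hc.le_iff_le]
          show _ ↔ TwoChains.le _ _
          simp only [TwoChains.le, Fin.mk_le_mk]
          omega
    -- the big auxiliary chain
    set Lo := (Finset.univ.filter fun q : Fin (pheight α) => q.1 < i).image c with hLodef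
    set Hi := (Finset.univ.filter fun q : Fin (pheight α) => U - 1 ≤ q.1).image c with hHidef
    set Tlow := t.filter (fun x => x ≤ zs) with hTlowdef
    have hLoMem : ∀ x ∈ Lo, ∃ q : Fin (pheight α), x = c q ∧ q.1 < i := by
      intro x hx
      rw [hLodef] at hx
      obtain ⟨q, hq, rfl⟩ := Finset.mem_image.mp hx
      exact ⟨q, rfl, (Finset.mem_filter.mp hq).2⟩
    have hHiMem : ∀ x ∈ Hi, ∃ q : Fin (pheight α), x = c q ∧ U - 1 ≤ q.1 := by
      intro x hx
      rw [hHidef] at hx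
      obtain ⟨q, hq, rfl⟩ := Finset.mem_image.mp hx
      exact ⟨q, rfl, (Finset.mem_filter.mp hq).2⟩
    have factA : ∀ q : Fin (pheight α), q.1 < i → ∀ x ∈ t, c q ≤ x := by
      intro q hq x hx
      rcases hmem x hx with h | ⟨j, rfl, hj1, -⟩
      · exact (le_dn_iff hc x q).mpr (by omega)
      · exact hc.monotone (Fin.mk_le_mk.mpr (by omega) : q ≤ j)
    have hUi : i + 1 ≤ U := by omega
    have factB : ∀ x ∈ Tlow, ∀ q : Fin (pheight α), U - 1 ≤ q.1 → x ≤ c q := by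
      intro x hx q hq
      rw [hTlowdef, Finset.mem_filter] at hx
      exact le_trans hx.2 ((le_up_iff hc zs q).mpr (by omega))
    have hEch : IsChain (· ≤ ·) (↑(Lo ∪ Tlow ∪ Hi) : Set α) := by
      intro x hx y hy hne
      simp only [Finset.coe_union, Set.mem_union, Finset.mem_coe] at hx hy
      rcases hx with (hx | hx) | hx <;> rcases hy with (hy | hy) | hy
      · obtain ⟨q, rfl, -⟩ := hLoMem x hx
        obtain ⟨q', rfl, -⟩ := hLoMem y hy
        rcases le_total q q' with h | h
        · exact Or.inl (hc.monotone h)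
        · exact Or.inr (hc.monotone h)
      · obtain ⟨q, rfl, hq⟩ := hLoMem x hx
        exact Or.inl (factA q hq y (Finset.mem_of_mem_filter _ hy))
      · obtain ⟨q, rfl, hq⟩ := hLoMem x hx
        obtain ⟨q', rfl, hq'⟩ := hHiMem y hy
        exact Or.inl (hc.monotone (Fin.mk_le_mk.mpr (by omega) : q ≤ q'))
      · obtain ⟨q, rfl, hq⟩ := hLoMem y hy
        exact Or.inr (factA q hq x (Finset.mem_of_mem_filter _ hx))
      · exact htch (Finset.mem_coe.mpr (Finset.mem_of_mem_filter _ hx))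
          (Finset.mem_coe.mpr (Finset.mem_of_mem_filter _ hy)) hne
      · obtain ⟨q', rfl, hq'⟩ := hHiMem y hy
        exact Or.inl (factB x hx q' hq')
      · obtain ⟨q, rfl, hq⟩ := hHiMem x hx
        obtain ⟨q', rfl, hq'⟩ := hLoMem y hy
        exact Or.inr (hc.monotone (Fin.mk_le_mk.mpr (by omega) : q' ≤ q))
      · obtain ⟨q, rfl, hq⟩ := hHiMem x hx
        exact Or.inr (factB y hy q hq)
      · obtain ⟨q, rfl, -⟩ := hHiMem x hx
        obtain ⟨q', rfl, -⟩ := hHiMem y hy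
        rcases le_total q q' with h | h
        · exact Or.inl (hc.monotone h)
        · exact Or.inr (hc.monotone h)
    have hd1 : Disjoint Lo Tlow := by
      rw [Finset.disjoint_left]
      intro x hx hx'
      obtain ⟨q, rfl, hq⟩ := hLoMem x hx
      rcases hmem _ (Finset.mem_of_mem_filter _ hx') with h | ⟨j, hj, hj1, -⟩
      · exact h.1 ⟨q, rfl⟩
      · have h2 := congrArg Fin.val (hc.injective hj.symm)
        omega
    have hd2 : Disjoint Lo Hi := by
      rw [Finset.disjoint_left]
      intro x hx hx'
      obtain ⟨q, rfl, hq⟩ := hLoMem x hx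
      obtain ⟨q', hq'e, hq'⟩ := hHiMem _ hx'
      have h2 := congrArg Fin.val (hc.injective hq'e)
      omega
    have hd3 : Disjoint Tlow Hi := by
      rw [Finset.disjoint_left]
      intro x hx hx'
      obtain ⟨q', rfl, hq'⟩ := hHiMem _ hx'
      rw [hTlowdef, Finset.mem_filter] at hx
      have h1 := (le_dn_iff hc zs q').mp hx.2
      omega
    have hLocard : Lo.card = i := by
      rw [hLodef, Finset.card_image_of_injective _ hc.injective, card_filter_lt_fin]
      omega
    have hHicard : Hi.card = pheight α - (U - 1) := by
      rw [hHidef, Finset.card_image_of_injective _ hc.injective, card_filter_ge_fin]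
    have hEcard : (Lo ∪ Tlow ∪ Hi).card = i + Tlow.card + (pheight α - (U - 1)) := by
      rw [Finset.card_union_of_disjoint (by
        rw [Finset.disjoint_union_left]; exact ⟨hd2, hd3⟩),
        Finset.card_union_of_disjoint hd1, hLocard, hHicard]
    have hEle := card_le_pheight _ hEch
    rw [hEcard] at hEle
    have hTlowcard : Tlow.card + i + 1 ≤ U := by omega
    set Thigh := t.filter (fun x => ¬ x ≤ zs) with hThighdef
    have hsplit1 : Tlow.card + Thigh.card = t.card := by
      rw [hTlowdef, hThighdef]
      exact Finset.card_filter_add_card_filter_not (p := fun x => x ≤ zs)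
    set ThighOn := Thigh.filter (fun x => x ∈ Set.range c) with hTOndef
    set ThighOff := Thigh.filter (fun x => x ∉ Set.range c) with hTOffdef
    have hsplit2 : ThighOn.card + ThighOff.card = Thigh.card := by
      rw [hTOndef, hTOffdef]
      exact Finset.card_filter_add_card_filter_not (p := fun x => x ∈ Set.range c)
    have hOn : ThighOn.card ≤ i + m - (U - 1) := by
      have h1 : ThighOn.card ≤ (Finset.Ico (U - 1) (i + m)).card := by
        apply Finset.card_le_card_of_injOn (fun x => dnN c x - 1)
        · intro x hx
          rw [hTOndef, Finset.mem_coe, Finset.mem_filter, hThighdef, Finset.mem_filter] at hx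
          obtain ⟨⟨hxt, hxle⟩, hxr⟩ := hx
          rcases hmem x hxt with h | ⟨j, rfl, hj1, hj2⟩
          · exact absurd hxr h.1
          · simp only [Finset.mem_coe, hidx j, Finset.mem_Ico]
            have hcomp : zs ≤ c j := by
              rcases htch (Finset.mem_coe.mpr hxt) (Finset.mem_coe.mpr hzs_t)
                (fun he => hzs.1 ⟨j, he⟩) with h | h
              · exact absurd h hxle
              · exact h
            have := (le_up_iff hc zs j).mp hcomp
            omega
        · intro x hx y hy hxy
          simp only [Finset.mem_coe, hTOndef, Finset.mem_filter, hThighdef] at hx hy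
          rcases hmem x hx.1.1 with h | ⟨j, rfl, -, -⟩
          · exact absurd hx.2 h.1
          rcases hmem y hy.1.1 with h | ⟨j', rfl, -, -⟩
          · exact absurd hy.2 h.1
          simp only [hidx j, hidx j'] at hxy
          exact congrArg c (Fin.ext hxy)
      rw [Nat.card_Ico] at h1
      exact h1
    have hOff : ThighOff.card ≤ k - 1 := by
      have hsub : ThighOff ⊆
          (Finset.univ.filter fun q : Fin Z.card => Z.card - k + 1 ≤ q.1).image g := by
        intro x hx
        rw [hTOffdef, Finset.mem_filter, hThighdef, Finset.mem_filter] at hx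
        obtain ⟨⟨hxt, hxle⟩, hxr⟩ := hx
        have hxZ : x ∈ Z := by rw [hZdef, Finset.mem_filter]; exact ⟨hxt, hxr⟩
        obtain ⟨q, rfl⟩ := (hgm x).mp hxZ
        refine Finset.mem_image.mpr ⟨q, ?_, rfl⟩
        rw [Finset.mem_filter]
        refine ⟨Finset.mem_univ _, ?_⟩
        by_contra hq
        push_neg at hq
        refine hxle ?_
        rw [hzsdef]
        exact hg.monotone (Fin.mk_le_mk.mpr (by omega) : q ≤ ⟨Z.card - k, hsk⟩)
      calc ThighOff.card ≤ _ := Finset.card_le_card hsub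
        _ ≤ (Finset.univ.filter fun q : Fin Z.card => Z.card - k + 1 ≤ q.1).card :=
          Finset.card_image_le
        _ = Z.card - (Z.card - k + 1) := card_filter_ge_fin Z.card (Z.card - k + 1)
        _ = k - 1 := by omega
    omega
end

section
/- For every n ≥ 2, there exists a finite poset P that excludes 3+3 (the disjoint sum of two 3-element chains), satisfies dim(P) ≥ n, and has the property that every convex subposet Q of P satisfies dim(Q) ≤ h(Q) + 1, where h(Q) is the height of Q. -/
variable {α : Type*}

namespace T
inductive Pos (n : ℕ) : Type
  | a (i : Fin n) : Pos n
  | c (k : Fin (n+1)) : Pos n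
  | b (j : Fin n) : Pos n

namespace Pos
variable {n : ℕ}

def le : Pos n → Pos n → Prop
  | .a i, .a j => i.1 = j.1
  | .a i, .c k => i.1 < k.1
  | .a i, .b j => ¬ i.1 = j.1
  | .c k, .c k' => k.1 ≤ k'.1
  | .c k, .b j => k.1 ≤ j.1
  | .b j, .b j' => j.1 = j'.1
  | _, _ => False

instance : PartialOrder (Pos n) where
  le := Pos.le
  le_refl x := by cases x <;> simp [Pos.le]
  le_trans x y z := by
    cases x <;> cases y <;> cases z <;> simp [Pos.le] <;> omega
  le_antisymm x y := by
    cases x <;> cases y <;> simp [Pos.le] <;> intro h1 h2 <;>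
      first
        | (exact congrArg _ (Fin.ext (by omega)))
        | omega

@[simp] lemma le_aa {i j : Fin n} : (Pos.a i ≤ Pos.a j) ↔ i.1 = j.1 := Iff.rfl
@[simp] lemma le_ac {i : Fin n} {k : Fin (n+1)} : (Pos.a i ≤ Pos.c k) ↔ i.1 < k.1 := Iff.rfl
@[simp] lemma le_ab {i j : Fin n} : (Pos.a i ≤ Pos.b j) ↔ ¬ i.1 = j.1 := Iff.rfl
@[simp] lemma le_cc {k k' : Fin (n+1)} : (Pos.c k ≤ Pos.c k') ↔ k.1 ≤ k'.1 := Iff.rfl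
@[simp] lemma le_cb {k : Fin (n+1)} {j : Fin n} : (Pos.c k ≤ Pos.b j) ↔ k.1 ≤ j.1 := Iff.rfl
@[simp] lemma le_ca {k : Fin (n+1)} {i : Fin n} : (Pos.c k ≤ Pos.a i) ↔ False := Iff.rfl
@[simp] lemma le_ba {j i : Fin n} : (Pos.b j ≤ Pos.a i) ↔ False := Iff.rfl
@[simp] lemma le_bc {j : Fin n} {k : Fin (n+1)} : (Pos.b j ≤ Pos.c k) ↔ False := Iff.rfl
@[simp] lemma le_bb {j j' : Fin n} : (Pos.b j ≤ Pos.b j') ↔ j.1 = j'.1 := Iff.rfl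

def toSum : Pos n → (Fin n ⊕ (Fin (n+1) ⊕ Fin n))
  | .a i => .inl i
  | .c k => .inr (.inl k)
  | .b j => .inr (.inr j)

def ofSum : (Fin n ⊕ (Fin (n+1) ⊕ Fin n)) → Pos n
  | .inl i => .a i
  | .inr (.inl k) => .c k
  | .inr (.inr j) => .b j

def posEquiv : Pos n ≃ (Fin n ⊕ (Fin (n+1) ⊕ Fin n)) where
  toFun := toSum
  invFun := ofSum
  left_inv := by rintro (i|k|j) <;> rfl
  right_inv := by rintro (i|(k|j)) <;> rfl

instance : Fintype (Pos n) := Fintype.ofEquiv _ posEquiv.symm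

/-- key for extension A : interleaves a's and c's (reversing all (a,c) pairs), b's descending at end -/
def rA : Pos n → ℤ
  | .a i => 4*(i.1:ℤ)+2
  | .c k => 4*(k.1:ℤ)
  | .b j => 8*(n:ℤ)+16-4*(j.1:ℤ)

/-- key for extension B : a's descending first, b's and c's interleaved (reversing all (c,b) pairs) -/
def rB : Pos n → ℤ
  | .a i => -4*(i.1:ℤ)-4
  | .c k => 4*(k.1:ℤ)
  | .b j => 4*(j.1:ℤ)+2

/-- key for extension reversing the pair (a i, b i) -/
def rP (i : Fin n) : Pos n → ℤ
  | .a i' => if i'.1 = i.1 then 4*(i.1:ℤ)+2 else -4*(i'.1:ℤ)-4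
  | .c k => 4*(k.1:ℤ)
  | .b j => if j.1 = i.1 then 4*(i.1:ℤ)+1 else 8*(n:ℤ)+8+4*(j.1:ℤ)

lemma mono_rA : ∀ x y : Pos n, x ≤ y → rA x ≤ rA y := by
  rintro (⟨i,hi⟩|⟨k,hk⟩|⟨j,hj⟩) (⟨i',hi'⟩|⟨k',hk'⟩|⟨j',hj'⟩) h <;>
    simp_all [rA] <;> omega

lemma inj_rA : Function.Injective (rA (n := n)) := by
  rintro (⟨i,hi⟩|⟨k,hk⟩|⟨j,hj⟩) (⟨i',hi'⟩|⟨k',hk'⟩|⟨j',hj'⟩) h <;>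
    simp_all [rA] <;> first | (congr 1; exact Fin.ext (by omega)) | omega

lemma mono_rB : ∀ x y : Pos n, x ≤ y → rB x ≤ rB y := by
  rintro (⟨i,hi⟩|⟨k,hk⟩|⟨j,hj⟩) (⟨i',hi'⟩|⟨k',hk'⟩|⟨j',hj'⟩) h <;>
    simp_all [rB] <;> omega

lemma inj_rB : Function.Injective (rB (n := n)) := by
  rintro (⟨i,hi⟩|⟨k,hk⟩|⟨j,hj⟩) (⟨i',hi'⟩|⟨k',hk'⟩|⟨j',hj'⟩) h <;>
    simp_all [rB] <;> first | (congr 1; exact Fin.ext (by omega)) | omega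

lemma mono_rP (t : Fin n) : ∀ x y : Pos n, x ≤ y → rP t x ≤ rP t y := by
  have ht := t.2
  rintro (⟨i,hi⟩|⟨k,hk⟩|⟨j,hj⟩) (⟨i',hi'⟩|⟨k',hk'⟩|⟨j',hj'⟩) h <;>
    simp_all [rP] <;> split_ifs <;> omega

lemma inj_rP (t : Fin n) : Function.Injective (rP (n := n) t) := by
  have ht := t.2
  rintro (⟨i,hi⟩|⟨k,hk⟩|⟨j,hj⟩) (⟨i',hi'⟩|⟨k',hk'⟩|⟨j',hj'⟩) h <;>
    simp_all [rP] <;> split_ifs at h <;>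
      first | (congr 1; exact Fin.ext (by omega)) | omega

/-- coverage: every incomparable pair is reversed by rA, rB, or (for (a i, b i)) by rP i. -/
lemma cov (x y : Pos n) (hxy : ¬ x ≤ y) (hyx : ¬ y ≤ x) :
    (rA y < rA x) ∨ (rB y < rB x) ∨
      (∃ i : Fin n, x = Pos.a i ∧ y = Pos.b i ∧ rP i y < rP i x) := by
  rcases x with ⟨i,hi⟩|⟨k,hk⟩|⟨j,hj⟩ <;> rcases y with ⟨i',hi'⟩|⟨k',hk'⟩|⟨j',hj'⟩
  case a.a => simp_all [rA, rB] <;> omega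
  case a.c => simp_all [rA, rB] <;> omega
  case a.b =>
    have hij : i = j' := by simp_all
    subst hij
    refine Or.inr (Or.inr ⟨⟨i,hi⟩, rfl, rfl, ?_⟩)
    simp [rP]
  case c.a => simp_all [rA, rB] <;> omega
  case c.c => simp_all [rA, rB] <;> omega
  case c.b => simp_all [rA, rB] <;> omega
  case b.a => simp_all [rA, rB] <;> omega
  case b.c => simp_all [rA, rB] <;> omega
  case b.b => simp_all [rA, rB] <;> omega

end Pos
variable {γ : Type*} [PartialOrder γ]

lemma isLinExt_of_key (ρ : γ → ℤ) (hmono : ∀ x y : γ, x ≤ y → ρ x ≤ ρ y)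
    (hinj : Function.Injective ρ) : IsLinExt (fun x y => ρ x ≤ ρ y) := by
  refine ⟨?_, hmono⟩
  exact { refl := fun x => le_refl _
          trans := fun a b c hab hbc => le_trans hab hbc
          antisymm := fun a b h1 h2 => hinj (le_antisymm h1 h2)
          total := fun a b => le_total _ _ }

lemma realizer_of_keys (KS : List (γ → ℤ)) (h0 : KS ≠ [])
    (hmono : ∀ ρ ∈ KS, ∀ x y : γ, x ≤ y → ρ x ≤ ρ y)
    (hinj : ∀ ρ ∈ KS, Function.Injective ρ)
    (hcov : ∀ x y : γ, ¬ x ≤ y → ¬ y ≤ x → ∃ ρ ∈ KS, ρ y < ρ x) :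
    ∃ L : Fin KS.length → γ → γ → Prop, IsRealizer L := by
  refine ⟨fun t x y => KS.get t x ≤ KS.get t y, ?_, ?_⟩
  · intro t
    exact isLinExt_of_key _ (hmono _ (List.get_mem KS t)) (hinj _ (List.get_mem KS t))
  · intro x y
    constructor
    · intro h t; exact hmono _ (List.get_mem KS t) _ _ h
    · intro h
      by_contra hxy
      by_cases hyx : y ≤ x
      · have hne : x ≠ y := fun he => hxy (he ▸ le_refl x)
        have hlen : 0 < KS.length := List.length_pos_iff.2 h0
        have h1 := h ⟨0, hlen⟩
        have h2 := hmono _ (List.get_mem KS ⟨0, hlen⟩) _ _ hyx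
        exact hne (hinj _ (List.get_mem KS ⟨0, hlen⟩) (le_antisymm h1 h2))
      · obtain ⟨ρ, hρ, hlt⟩ := hcov x y hxy hyx
        obtain ⟨t, ht⟩ := List.mem_iff_get.1 hρ
        have h1 : KS.get t x ≤ KS.get t y := h t
        rw [ht] at h1
        omega

lemma pdim_le_of_keys (KS : List (γ → ℤ)) (h0 : KS ≠ [])
    (hmono : ∀ ρ ∈ KS, ∀ x y : γ, x ≤ y → ρ x ≤ ρ y)
    (hinj : ∀ ρ ∈ KS, Function.Injective ρ)
    (hcov : ∀ x y : γ, ¬ x ≤ y → ¬ y ≤ x → ∃ ρ ∈ KS, ρ y < ρ x) :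
    pdim γ ≤ KS.length :=
  Nat.sInf_le ⟨List.length_pos_iff.2 h0, realizer_of_keys KS h0 hmono hinj hcov⟩

lemma heightSet_ge [Fintype γ] (S : Set γ) (t : Finset γ) (hsub : ↑t ⊆ S)
    (hch : IsChain (· ≤ ·) (↑t : Set γ)) : t.card ≤ heightSet S := by
  apply le_csSup
  · exact ⟨Fintype.card γ, by rintro m ⟨u, -, -, rfl⟩; exact Finset.card_le_univ u⟩
  · exact ⟨t, hsub, hch, rfl⟩


lemma Pos.mid {n : ℕ} (x y z : Pos n) (h1 : x < y) (h2 : y < z) : ∃ k, y = Pos.c k := by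
  rcases y with i|k|j
  · exfalso
    rcases x with i'|k'|j'
    · exact h1.ne (congrArg _ (Fin.ext (by simpa using h1.le)))
    · exact h1.le
    · exact h1.le
  · exact ⟨k, rfl⟩
  · exfalso
    rcases z with i'|k'|j'
    · exact h2.le
    · exact h2.le
    · exact h2.ne (congrArg _ (Fin.ext (by simpa using h2.le)))

def tl (v : Fin 3) : TwoChains 3 := Sum.inl v
def tr (v : Fin 3) : TwoChains 3 := Sum.inr v

lemma tl_le {i j : Fin 3} (h : i.1 ≤ j.1) : tl i ≤ tl j := h
lemma tl_nle {i j : Fin 3} (h : ¬ i.1 ≤ j.1) : ¬ tl i ≤ tl j := h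
lemma tr_le {i j : Fin 3} (h : i.1 ≤ j.1) : tr i ≤ tr j := h
lemma tr_nle {i j : Fin 3} (h : ¬ i.1 ≤ j.1) : ¬ tr i ≤ tr j := h
lemma tl_nle_tr {i j : Fin 3} : ¬ tl i ≤ tr j := fun h => h
lemma tr_nle_tl {i j : Fin 3} : ¬ tr i ≤ tl j := fun h => h

lemma noTT (n : ℕ) : ¬ Nonempty (TwoChains 3 ↪o Pos n) := by
  rintro ⟨f⟩
  have lt01 : tl 0 < tl 1 := lt_iff_le_not_ge.2 ⟨tl_le (by decide), tl_nle (by decide)⟩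
  have lt12 : tl 1 < tl 2 := lt_iff_le_not_ge.2 ⟨tl_le (by decide), tl_nle (by decide)⟩
  have lt01' : tr 0 < tr 1 := lt_iff_le_not_ge.2 ⟨tr_le (by decide), tr_nle (by decide)⟩
  have lt12' : tr 1 < tr 2 := lt_iff_le_not_ge.2 ⟨tr_le (by decide), tr_nle (by decide)⟩
  obtain ⟨k, hk⟩ := Pos.mid _ _ _ (f.lt_iff_lt.2 lt01) (f.lt_iff_lt.2 lt12)
  obtain ⟨k', hk'⟩ := Pos.mid _ _ _ (f.lt_iff_lt.2 lt01') (f.lt_iff_lt.2 lt12')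
  rcases le_total k.1 k'.1 with h | h
  · exact tl_nle_tr (f.le_iff_le.1 (by rw [hk, hk']; exact h))
  · exact tr_nle_tl (f.le_iff_le.1 (by rw [hk, hk']; exact h))

lemma pdim_ge (n : ℕ) : n ≤ pdim (Pos n) := by
  apply le_csInf
  · -- nonempty: a realizer from the full key list
    refine ⟨(((Pos.rA) :: (Pos.rB) :: (List.finRange n).map Pos.rP : List (Pos n → ℤ))).length,
      List.length_pos_iff.2 (by simp), ?_⟩
    apply realizer_of_keys
    · simp
    · rintro ρ hρ
      simp only [List.mem_cons, List.mem_map, List.mem_finRange] at hρ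
      rcases hρ with rfl | rfl | ⟨i, -, rfl⟩
      · exact Pos.mono_rA
      · exact Pos.mono_rB
      · exact Pos.mono_rP i
    · rintro ρ hρ
      simp only [List.mem_cons, List.mem_map, List.mem_finRange] at hρ
      rcases hρ with rfl | rfl | ⟨i, -, rfl⟩
      · exact Pos.inj_rA
      · exact Pos.inj_rB
      · exact Pos.inj_rP i
    · intro x y hxy hyx
      rcases Pos.cov x y hxy hyx with h | h | ⟨i, -, -, h⟩
      · exact ⟨Pos.rA, by simp, h⟩
      · exact ⟨Pos.rB, by simp, h⟩
      · exact ⟨Pos.rP i, by simp, h⟩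
  · rintro d ⟨hd, L, hLe, hLiff⟩
    have key : ∀ i : Fin n, ∃ k, ¬ L k (Pos.a i) (Pos.b i) := by
      intro i
      by_contra h
      push_neg at h
      have := (hLiff _ _).2 h
      simp at this
    choose f hf using key
    have hinj : Function.Injective f := by
      intro i j hij
      by_contra hne
      set k := f i with hk
      haveI : IsLinearOrder _ (L k) := (hLe k).1
      have t1 : L k (Pos.b i) (Pos.a i) := (Std.Total.total _ _).resolve_left (hf i)
      have t3 : L k (Pos.b j) (Pos.a j) := by
        have := hf j; rw [← hij] at this
        exact (Std.Total.total _ _).resolve_left this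
      have t2 : L k (Pos.a j) (Pos.b i) :=
        (hLiff _ _).1 (by simp only [Pos.le_ab]; exact fun h => hne (Fin.ext h.symm) :
          (Pos.a j : Pos n) ≤ Pos.b i) k
      have t4 : L k (Pos.a i) (Pos.b j) :=
        (hLiff _ _).1 (by simp only [Pos.le_ab]; exact fun h => hne (Fin.ext h) :
          (Pos.a i : Pos n) ≤ Pos.b j) k
      have t5 : L k (Pos.b j) (Pos.a i) :=
        IsTrans.trans _ _ _ (IsTrans.trans _ _ _ t3 t2) t1
      have : (Pos.a i : Pos n) = Pos.b j := Std.Antisymm.antisymm _ _ t4 t5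
      cases this
    simpa using Fintype.card_le_of_injective f hinj

lemma key_convex (n : ℕ) (Q : Set (Pos n)) (hQ : Q.OrdConnected) :
    pdim ↥Q ≤ heightSet Q + 1 := by
  classical
  by_cases hstrict : ∃ x, x ∈ Q ∧ ∃ y, y ∈ Q ∧ x < y
  · obtain ⟨x0, hx0, y0, hy0, hxy0⟩ := hstrict
    set D : Finset (Fin n) :=
      Finset.univ.filter (fun i : Fin n => Pos.a i ∈ Q ∧ Pos.b i ∈ Q) with hD
    set KS : List (↥Q → ℤ) :=
      (fun q => Pos.rA q.1) :: (fun q => Pos.rB q.1) ::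
        D.toList.map (fun i q => Pos.rP i q.1) with hKS
    have hlen : KS.length = 2 + D.card := by
      simp [hKS, Finset.length_toList]; omega
    have hdim : pdim ↥Q ≤ 2 + D.card := by
      rw [← hlen]
      apply pdim_le_of_keys
      · simp [hKS]
      · rintro ρ hρ
        simp only [hKS, List.mem_cons, List.mem_map, Finset.mem_toList] at hρ
        rcases hρ with rfl | rfl | ⟨i, -, rfl⟩ <;>
          · intro x y hxy
            first
              | exact Pos.mono_rA _ _ (Subtype.coe_le_coe.2 hxy)
              | exact Pos.mono_rB _ _ (Subtype.coe_le_coe.2 hxy)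
              | exact Pos.mono_rP _ _ _ (Subtype.coe_le_coe.2 hxy)
      · rintro ρ hρ
        simp only [hKS, List.mem_cons, List.mem_map, Finset.mem_toList] at hρ
        rcases hρ with rfl | rfl | ⟨i, -, rfl⟩ <;>
          · intro x y hxy
            apply Subtype.ext
            first
              | exact Pos.inj_rA hxy
              | exact Pos.inj_rB hxy
              | exact Pos.inj_rP _ hxy
      · intro x y h1 h2
        have h1' : ¬ x.1 ≤ y.1 := fun h => h1 (Subtype.coe_le_coe.1 h)
        have h2' : ¬ y.1 ≤ x.1 := fun h => h2 (Subtype.coe_le_coe.1 h)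
        rcases Pos.cov x.1 y.1 h1' h2' with h | h | ⟨i, hx, hy, h⟩
        · exact ⟨fun q => Pos.rA q.1, by simp [hKS], h⟩
        · exact ⟨fun q => Pos.rB q.1, by simp [hKS], h⟩
        · have hiD : i ∈ D := by
            simp only [hD, Finset.mem_filter, Finset.mem_univ, true_and]
            exact ⟨hx ▸ x.2, hy ▸ y.2⟩
          refine ⟨fun q => Pos.rP i q.1, ?_, h⟩
          simp only [hKS, List.mem_cons, List.mem_map, Finset.mem_toList]
          exact Or.inr (Or.inr ⟨i, hiD, rfl⟩)
    have hx0y0 : x0 ≠ y0 := ne_of_lt hxy0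
    have hh2 : 2 ≤ heightSet Q := by
      have := heightSet_ge Q {x0, y0} ?_ ?_
      · rwa [Finset.card_pair hx0y0] at this
      · intro u hu
        simp only [Finset.coe_insert, Finset.coe_singleton, Set.mem_insert_iff,
          Set.mem_singleton_iff] at hu
        rcases hu with rfl | rfl <;> assumption
      · intro u hu v hv huv
        simp only [Finset.coe_insert, Finset.coe_singleton, Set.mem_insert_iff,
          Set.mem_singleton_iff] at hu hv
        rcases hu with rfl | rfl <;> rcases hv with rfl | rfl
        · exact absurd rfl huv
        · exact Or.inl hxy0.le
        · exact Or.inr hxy0.le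
        · exact absurd rfl huv
    rcases le_or_gt D.card 1 with hDc | hDc
    · omega
    · have hDne : D.Nonempty := Finset.card_pos.1 (by omega)
      set i1 := D.min' hDne with hi1
      set i2 := D.max' hDne with hi2
      have h12 : i1 < i2 := D.min'_lt_max'_of_card hDc
      have hsub : D ⊆ Finset.Icc i1 i2 :=
        fun d hd => Finset.mem_Icc.2 ⟨D.min'_le d hd, D.le_max' d hd⟩
      have hcard : D.card ≤ i2.1 - i1.1 + 1 := by
        have h := Finset.card_le_card hsub
        rw [Fin.card_Icc] at h
        omega
      have ha1 : Pos.a i1 ∈ Q :=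
        (Finset.mem_filter.1 (D.min'_mem hDne)).2.1
      have hb2 : Pos.b i2 ∈ Q :=
        (Finset.mem_filter.1 (D.max'_mem hDne)).2.2
      have hi2n : i2.1 < n := i2.2
      set g : ℕ → Pos n := fun m =>
        if m = i2.1 + 1 then Pos.b i2
        else if m = i1.1 then Pos.a i1
        else if hm : m < n + 1 then Pos.c ⟨m, hm⟩ else Pos.b i2 with hg
      have hgmono : ∀ m m', m ∈ Finset.Icc i1.1 (i2.1+1) → m' ∈ Finset.Icc i1.1 (i2.1+1) →
          m ≤ m' → g m ≤ g m' := by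
        intro m m' hm hm' hmm'
        have h12' : i1.1 < i2.1 := h12
        rw [Finset.mem_Icc] at hm hm'
        rw [hg]
        simp only []
        split_ifs with e1 e2 e3 e4 e5 e6 e7 e8 <;>
          first
            | exact le_refl _
            | (simp only [Pos.le_bb, Pos.le_ab, Pos.le_ac, Pos.le_cc, Pos.le_cb, Pos.le_aa, Pos.le_bc, Pos.le_ba, Pos.le_ca, iff_false]; omega)
            | omega
      have hginj : Set.InjOn g ↑(Finset.Icc i1.1 (i2.1+1)) := by
        intro m hm m' hm' heq
        simp only [Finset.coe_Icc, Set.mem_Icc] at hm hm'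
        rw [hg] at heq
        simp only [] at heq
        split_ifs at heq <;>
          first
            | omega
            | (simp only [Pos.c.injEq, Fin.mk.injEq] at heq; omega)
            | (refine absurd heq ?_; simp)
            | (refine absurd heq.symm ?_; simp)
      have hchain : IsChain (· ≤ ·) (↑((Finset.Icc i1.1 (i2.1+1)).image g) : Set (Pos n)) := by
        intro u hu v hv huv
        simp only [Finset.coe_image, Set.mem_image, Finset.mem_coe] at hu hv
        obtain ⟨m, hm, rfl⟩ := hu
        obtain ⟨m', hm', rfl⟩ := hv
        rcases le_total m m' with h | h
        · exact Or.inl (hgmono m m' hm hm' h)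
        · exact Or.inr (hgmono m' m hm' hm h)
      have hsubQ : ↑((Finset.Icc i1.1 (i2.1+1)).image g) ⊆ Q := by
        intro u hu
        simp only [Finset.coe_image, Set.mem_image, Finset.mem_coe] at hu
        obtain ⟨m, hm, rfl⟩ := hu
        rw [Finset.mem_Icc] at hm
        rw [hg]
        simp only []
        split_ifs with e1 e2 e3
        · exact hb2
        · exact ha1
        · refine hQ.out ha1 hb2 ⟨?_, ?_⟩
          · simp only [Pos.le_ac]; omega
          · simp only [Pos.le_cb]; omega
        · omega
      have hht : (Finset.Icc i1.1 (i2.1+1)).card ≤ heightSet Q := by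
        rw [← Finset.card_image_of_injOn hginj]
        exact heightSet_ge Q _ hsubQ hchain
      rw [Nat.card_Icc] at hht
      omega
  · by_cases hne : Nonempty ↥Q
    · obtain ⟨x0⟩ := hne
      have heq : ∀ x y : ↥Q, x ≤ y → x = y := by
        intro x y hxy
        apply Subtype.ext
        by_contra hne'
        exact hstrict ⟨x.1, x.2, y.1, y.2, lt_of_le_of_ne (Subtype.coe_le_coe.2 hxy) hne'⟩
      have hdim : pdim ↥Q ≤ 2 := by
        have h := pdim_le_of_keys (γ := ↥Q)
          [fun q => Pos.rA q.1, fun q => -Pos.rA q.1] (by simp) ?_ ?_ ?_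
        · simpa using h
        · rintro ρ hρ
          simp only [List.mem_cons, List.not_mem_nil, or_false] at hρ
          rcases hρ with rfl | rfl <;>
            · intro x y hxy
              rw [heq x y hxy]
        · rintro ρ hρ
          simp only [List.mem_cons, List.not_mem_nil, or_false] at hρ
          rcases hρ with rfl | rfl
          · intro x y hxy
            exact Subtype.ext (Pos.inj_rA hxy)
          · intro x y hxy
            apply Subtype.ext
            apply Pos.inj_rA
            have h' : -Pos.rA x.1 = -Pos.rA y.1 := hxy
            omega
        · intro x y h1 h2
          have hne' : x.1 ≠ y.1 := by
            intro h
            exact h1 (le_of_eq (Subtype.ext h))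
          have hρ : Pos.rA x.1 ≠ Pos.rA y.1 := fun h => hne' (Pos.inj_rA h)
          rcases lt_or_gt_of_ne hρ with h | h
          · refine ⟨fun q => -Pos.rA q.1, by simp, ?_⟩
            show -Pos.rA y.1 < -Pos.rA x.1
            omega
          · exact ⟨fun q => Pos.rA q.1, by simp, h⟩
      have hh1 : 1 ≤ heightSet Q := by
        have := heightSet_ge Q {x0.1} ?_ ?_
        · simpa using this
        · simpa using x0.2
        · simp [IsChain, Set.Pairwise]
      omega
    · have hdim : pdim ↥Q ≤ 1 := by
        have h := pdim_le_of_keys (γ := ↥Q) [fun _ => (0:ℤ)] (by simp) ?_ ?_ ?_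
        · simpa using h
        · intro ρ hρ x
          exact absurd ⟨x⟩ hne
        · intro ρ hρ x
          exact absurd ⟨x⟩ hne
        · intro x
          exact absurd ⟨x⟩ hne
      omega

end T

/-- For every `n ≥ 2` there is a finite poset excluding `3 + 3` with dimension at least
`n` in which every convex subposet `Q` satisfies `dim(Q) ≤ h(Q) + 1`. -/
theorem exists_poset_excluding_three_plus_three (n : ℕ) (hn : 2 ≤ n) :
    ∃ (β : Type) (_ : PartialOrder β) (_ : Fintype β),
      (¬ Nonempty (TwoChains 3 ↪o β)) ∧ n ≤ pdim β ∧
      ∀ Q : Set β, Q.OrdConnected → pdim ↥Q ≤ heightSet Q + 1 :=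
  ⟨T.Pos n, inferInstance, inferInstance, T.noTT n, T.pdim_ge n,
    fun Q hQ => T.key_convex n Q hQ⟩
end
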